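/- Let (L,|·|) be a complete non-Archimedean valued field with discrete value group, P ∈ L[z] of degree d ≥ 2, and a ∈ L. If g_P(a) > 0 then the iterates P^n(a) tend to infinity in norm, and moreover g_P(a) is a rational number. -/

import Mathlib

open Filter Polynomial

/-- If the value group of `L` is discrete (`‖x‖ ∈ e^ℤ` for `x ≠ 0`) and `g_P(a) > 0`,
then the iterates of `a` tend to infinity in norm and `g_P(a)` is rational. -/
theorem stmt4 {L : Type*} [NormedField L] [CompleteSpace L] [IsUltrametricDist L]
    (hdisc : ∀ x : L, x ≠ 0 → ∃ n : ℤ, ‖x‖ = Real.exp n)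
    (P : Polynomial L) (d : ℕ) (hd : 2 ≤ d) (hdeg : P.natDegree = d)
    (gP : L → ℝ)
    (hgP : ∀ z : L, Filter.Tendsto
      (fun (n : ℕ) =>
        (1 / (d : ℝ) ^ n) * Real.log (max 1 ‖(fun w => Polynomial.eval w P)^[n] z‖))
      Filter.atTop (nhds (gP z)))
    (a : L) (ha : 0 < gP a) :
    Filter.Tendsto (fun n : ℕ => ‖(fun w => Polynomial.eval w P)^[n] a‖)
      Filter.atTop Filter.atTop ∧ ∃ q : ℚ, gP a = q := by
  set f : L → L := fun w => Polynomial.eval w P with hf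
  set x : ℕ → L := fun n => f^[n] a with hx
  have hd1 : (1 : ℝ) < d := by exact_mod_cast lt_of_lt_of_le one_lt_two hd
  have hd0 : (0 : ℝ) < d := lt_trans one_pos hd1
  have hde : (d : ℝ) ≠ 0 := ne_of_gt hd0
  have hdm1 : (d : ℝ) - 1 ≠ 0 := by linarith
  have hP0 : P ≠ 0 := by
    intro h
    rw [h, natDegree_zero] at hdeg
    omega
  set a0 := P.leadingCoeff with ha0def
  have ha0 : a0 ≠ 0 := leadingCoeff_ne_zero.mpr hP0
  set c0 := ‖a0‖ with hc0def
  have hc0 : 0 < c0 := norm_pos_iff.mpr ha0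
  set M : ℝ := ∑ i ∈ Finset.range d, ‖P.coeff i‖ with hM
  have hMnn : 0 ≤ M := Finset.sum_nonneg fun i _ => norm_nonneg _
  have hMle : ∀ i ∈ Finset.range d, ‖P.coeff i‖ ≤ M := fun i hi =>
    Finset.single_le_sum (f := fun i => ‖P.coeff i‖) (fun j _ => norm_nonneg _) hi
  set T : ℝ := max 1 (max (M / c0) (1 / c0)) with hT
  have hT1 : (1 : ℝ) ≤ T := le_max_left _ _
  -- key: for ‖z‖ > T, ‖P(z)‖ = c0 * ‖z‖^d
  have key : ∀ z : L, T < ‖z‖ → ‖P.eval z‖ = c0 * ‖z‖ ^ d := by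
    intro z hz
    have hz1 : 1 < ‖z‖ := lt_of_le_of_lt hT1 hz
    have hzM : M < c0 * ‖z‖ := by
      have : M / c0 < ‖z‖ := lt_of_le_of_lt (le_trans (le_max_left _ _) (le_max_right _ _)) hz
      calc M = c0 * (M / c0) := by field_simp
        _ < c0 * ‖z‖ := by apply mul_lt_mul_of_pos_left this hc0
    have heval : P.eval z = (∑ i ∈ Finset.range d, P.coeff i * z ^ i) + a0 * z ^ d := by
      rw [eval_eq_sum_range, hdeg, Finset.sum_range_succ, ← hdeg, coeff_natDegree]
    have hbig : ‖a0 * z ^ d‖ = c0 * ‖z‖ ^ d := by rw [norm_mul, norm_pow]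
    have hsmall : ‖∑ i ∈ Finset.range d, P.coeff i * z ^ i‖ < c0 * ‖z‖ ^ d := by
      have hbound : ∀ i ∈ Finset.range d, ‖P.coeff i * z ^ i‖ ≤ M * ‖z‖ ^ (d - 1) := by
        intro i hi
        rw [norm_mul, norm_pow]
        have hile : i ≤ d - 1 := by
          have := Finset.mem_range.mp hi; omega
        have := pow_le_pow_right₀ hz1.le hile
        exact mul_le_mul (hMle i hi) this (by positivity) hMnn
      have h1 : ‖∑ i ∈ Finset.range d, P.coeff i * z ^ i‖ ≤ M * ‖z‖ ^ (d - 1) :=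
        IsUltrametricDist.norm_sum_le_of_forall_le_of_nonneg (by positivity) hbound
      refine lt_of_le_of_lt h1 ?_
      have hpow : c0 * ‖z‖ ^ d = (c0 * ‖z‖) * ‖z‖ ^ (d - 1) := by
        rw [mul_assoc, ← pow_succ']
        congr 2
        omega
      rw [hpow]
      exact mul_lt_mul_of_pos_right hzM (by positivity)
    rw [heval,
      IsUltrametricDist.norm_add_eq_max_of_norm_ne_norm (by rw [hbig]; exact ne_of_lt hsmall),
      hbig]
    exact max_eq_right hsmall.le
  -- forward invariance and growth
  have grow : ∀ z : L, T < ‖z‖ → ‖z‖ < ‖P.eval z‖ := by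
    intro z hz
    have hz1 : 1 < ‖z‖ := lt_of_le_of_lt hT1 hz
    have hzc : 1 < c0 * ‖z‖ := by
      have : 1 / c0 < ‖z‖ := lt_of_le_of_lt (le_trans (le_max_right _ _) (le_max_right _ _)) hz
      calc (1:ℝ) = c0 * (1 / c0) := by field_simp
        _ < c0 * ‖z‖ := mul_lt_mul_of_pos_left this hc0
    rw [key z hz]
    calc ‖z‖ = 1 * ‖z‖ := (one_mul _).symm
      _ < (c0 * ‖z‖) * ‖z‖ := mul_lt_mul_of_pos_right hzc (by positivity)
      _ ≤ (c0 * ‖z‖) * ‖z‖ ^ (d - 1) := by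
          apply mul_le_mul_of_nonneg_left _ (by positivity)
          calc ‖z‖ = ‖z‖ ^ 1 := (pow_one _).symm
            _ ≤ ‖z‖ ^ (d - 1) := pow_le_pow_right₀ hz1.le (by omega)
      _ = c0 * ‖z‖ ^ d := by
          rw [mul_assoc, ← pow_succ']
          congr 2
          omega
  -- escape to infinity
  have hesc : Tendsto (fun n : ℕ => ‖x n‖) atTop atTop := by
    have hlog : Tendsto (fun n : ℕ => Real.log (max 1 ‖x n‖)) atTop atTop := by
      have hev : ∀ᶠ n in atTop, gP a / 2 * (d : ℝ) ^ n ≤ Real.log (max 1 ‖x n‖) := by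
        have hev0 := (hgP a).eventually (eventually_gt_nhds (show gP a / 2 < gP a by linarith))
        filter_upwards [hev0] with n hn
        have hpow : (0 : ℝ) < (d : ℝ) ^ n := by positivity
        have h2 : (1 / (d:ℝ)^n) * Real.log (max 1 ‖x n‖) * (d:ℝ)^n
            = Real.log (max 1 ‖x n‖) := by field_simp
        nlinarith [mul_le_mul_of_nonneg_right hn.le hpow.le]
      have hpowt : Tendsto (fun n : ℕ => gP a / 2 * (d : ℝ) ^ n) atTop atTop :=
        (tendsto_pow_atTop_atTop_of_one_lt hd1).const_mul_atTop (by linarith)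
      exact tendsto_atTop_mono' atTop hev hpowt
    have hmax : Tendsto (fun n : ℕ => max 1 ‖x n‖) atTop atTop := by
      have : Tendsto (fun n : ℕ => Real.exp (Real.log (max 1 ‖x n‖))) atTop atTop :=
        Real.tendsto_exp_atTop.comp hlog
      refine this.congr fun n => ?_
      exact Real.exp_log (lt_of_lt_of_le one_pos (le_max_left _ _))
    refine hmax.congr' ?_
    filter_upwards [hmax.eventually_gt_atTop 1] with n hn
    have h1 : 1 ≤ ‖x n‖ := by
      rcases le_or_gt 1 ‖x n‖ with h | h
      · exact h
      · rw [max_eq_left h.le] at hn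
        exact absurd hn (lt_irrefl 1)
    exact max_eq_right h1
  refine ⟨hesc, ?_⟩
  -- pick n0 entering the escape region
  obtain ⟨n0, hn0⟩ := (hesc.eventually_gt_atTop T).exists
  set c : ℝ := Real.log c0 with hc
  -- all later iterates stay in the region
  have hinv : ∀ k : ℕ, T < ‖x (n0 + k)‖ := by
    intro k
    induction k with
    | zero => simpa using hn0
    | succ k ih =>
      have hstep : x (n0 + (k + 1)) = P.eval (x (n0 + k)) := by
        show f^[n0 + (k+1)] a = P.eval (f^[n0+k] a)
        rw [show n0 + (k+1) = (n0 + k) + 1 by ring, Function.iterate_succ_apply']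
      rw [hstep]
      exact lt_trans ih (grow _ ih)
  have hxpos : ∀ k : ℕ, 0 < ‖x (n0 + k)‖ := fun k =>
    lt_of_lt_of_le one_pos (le_trans hT1 (hinv k).le)
  -- exact recursion for the logs
  have hrec : ∀ k : ℕ,
      Real.log ‖x (n0 + k)‖ = (d : ℝ) ^ k * (Real.log ‖x n0‖ + c / (d - 1)) - c / (d - 1) := by
    intro k
    induction k with
    | zero => simp
    | succ k ih =>
      have hstep : x (n0 + (k + 1)) = P.eval (x (n0 + k)) := by
        show f^[n0 + (k+1)] a = P.eval (f^[n0+k] a)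
        rw [show n0 + (k+1) = (n0 + k) + 1 by ring, Function.iterate_succ_apply']
      have hkey := key _ (hinv k)
      rw [hstep, hkey, Real.log_mul (ne_of_gt hc0) (pow_ne_zero d (ne_of_gt (hxpos k))), Real.log_pow, ← hc, ih]
      field_simp
      ring
  -- limit of the subsequence
  set U : ℝ := Real.log ‖x n0‖ + c / (d - 1) with hU
  set g0 : ℝ := U / (d : ℝ) ^ n0 with hg0
  have hsubeq : (fun k : ℕ => (1 / (d : ℝ) ^ (n0 + k)) * Real.log (max 1 ‖x (n0 + k)‖))
      = fun k : ℕ => g0 - (c / (d - 1)) * ((1 / d) ^ n0 * (1 / d) ^ k) := by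
    funext k
    have h1 : max 1 ‖x (n0 + k)‖ = ‖x (n0 + k)‖ :=
      max_eq_right (le_trans hT1 (hinv k).le)
    rw [h1, hrec k, hg0, hU]
    have hdk : ((d : ℝ) ^ k) ≠ 0 := by positivity
    have hdn0 : ((d : ℝ) ^ n0) ≠ 0 := by positivity
    simp only [one_div, inv_pow]
    field_simp
    ring
  have hsub : Tendsto (fun k : ℕ => (1 / (d : ℝ) ^ (n0 + k)) * Real.log (max 1 ‖x (n0 + k)‖))
      atTop (nhds g0) := by
    rw [hsubeq]
    have h0 : Tendsto (fun k : ℕ => (c / (d - 1)) * ((1 / d) ^ n0 * (1 / (d:ℝ)) ^ k)) atTop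
        (nhds 0) := by
      have hlt : |1 / (d : ℝ)| < 1 := by
        rw [abs_of_pos (by positivity)]
        rw [div_lt_one hd0]
        exact hd1
      have := (tendsto_pow_atTop_nhds_zero_of_abs_lt_one hlt).const_mul
        ((c / ((d:ℝ) - 1)) * (1 / (d:ℝ)) ^ n0)
      simpa [mul_assoc] using this
    have h1 : Tendsto (fun k : ℕ => g0 - c / ((d:ℝ) - 1) * ((1 / d) ^ n0 * (1 / (d:ℝ)) ^ k))
        atTop (nhds (g0 - 0)) := Tendsto.sub tendsto_const_nhds h0
    simpa using h1
  have hsub' : Tendsto (fun k : ℕ => (1 / (d : ℝ) ^ (n0 + k)) * Real.log (max 1 ‖x (n0 + k)‖))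
      atTop (nhds (gP a)) := by
    have hcomp : Tendsto (fun k : ℕ => n0 + k) atTop atTop :=
      tendsto_atTop_mono (fun k => Nat.le_add_left k n0) tendsto_id
    exact (hgP a).comp hcomp
  have hgeq : gP a = g0 := tendsto_nhds_unique hsub' hsub
  -- rationality
  have hx0 : x n0 ≠ 0 := by
    intro h
    have := hn0
    rw [h, norm_zero] at this
    linarith [lt_of_lt_of_le one_pos hT1]
  obtain ⟨m, hm⟩ := hdisc (x n0) hx0
  obtain ⟨j, hj⟩ := hdisc a0 ha0
  refine ⟨((m : ℚ) + j / ((d : ℚ) - 1)) / (d : ℚ) ^ n0, ?_⟩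
  have hdq : ((d : ℚ) - 1) ≠ 0 := by
    have : (2 : ℚ) ≤ (d : ℚ) := by exact_mod_cast hd
    intro h; rw [sub_eq_zero] at h; rw [h] at this; norm_num at this
  have hdq0 : ((d : ℚ) ^ n0) ≠ 0 := by
    have : (0:ℚ) < (d:ℚ) := by exact_mod_cast hd0
    positivity
  rw [hgeq, hg0, hU, hc, hm, hc0def, hj, Real.log_exp, Real.log_exp]
  push_cast
  ring
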